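/- For any positive integer k, ∑_{i=0}^{k} min(2^{k−i}, 2^{2^i}) ≤ (2 + ε_k) · 2^k / k for some sequence ε_k → 0 as k → ∞. -/

import Mathlib

open Finset Filter

private lemma exists_i0 (k : ℕ) : ∃ i, k - i ≤ 2 ^ i := ⟨k, by simp⟩

noncomputable def i0fn (k : ℕ) : ℕ := Nat.find (exists_i0 k)

private lemma i0_spec (k : ℕ) : k - i0fn k ≤ 2 ^ i0fn k := Nat.find_spec (exists_i0 k)

private lemma i0_min (k j : ℕ) (h : j < i0fn k) : 2 ^ j < k - j :=
  Nat.not_le.mp (Nat.find_min (exists_i0 k) h)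

private lemma i0_le (k : ℕ) : i0fn k ≤ k := Nat.find_le (by simp)

private lemma sum_ddexp (n : ℕ) : ∑ i ∈ Finset.range n, 2 ^ (2 ^ i) ≤ 2 ^ (2 ^ n) := by
  induction n with
  | zero => simp
  | succ n ih =>
    rw [Finset.sum_range_succ]
    have hle : 2 ^ n + 1 ≤ 2 ^ (n + 1) := by
      have := Nat.one_le_two_pow (n := n)
      rw [pow_succ]
      omega
    have h2 : (2:ℕ) ^ (2 ^ n + 1) ≤ 2 ^ (2 ^ (n + 1)) :=
      Nat.pow_le_pow_right (by norm_num) hle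
    rw [pow_succ] at h2
    omega

private lemma sum_ddexp' (m : ℕ) (hm : 1 ≤ m) :
    ∑ i ∈ Finset.range m, 2 ^ (2 ^ i) ≤ 2 ^ (2 ^ (m - 1) + 1) := by
  obtain ⟨n, rfl⟩ := Nat.exists_eq_add_of_le' hm
  simp only [Nat.add_sub_cancel]
  rw [Finset.sum_range_succ]
  have h3 := sum_ddexp n
  rw [pow_succ]
  omega

private lemma sum_two_pow (n : ℕ) : ∑ j ∈ Finset.range n, 2 ^ j ≤ 2 ^ n := by
  induction n with
  | zero => simp
  | succ n ih =>
    rw [Finset.sum_range_succ, pow_succ]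
    omega

private lemma core (m a d : ℕ) (hm : 1 ≤ m) (ha : a = 2 ^ (m - 1)) (had : a ≤ d)
    (hda : d ≤ 2 * a) :
    (2 ^ (a + 1) + 2 ^ (d + 1)) * (d + m) ≤ (4 * a + 8 * m + 4) * 2 ^ d := by
  have ha1 : 1 ≤ a := ha ▸ Nat.one_le_two_pow
  have h2a : (2:ℕ) ^ a ≤ 2 ^ d := Nat.pow_le_pow_right (by norm_num) had
  rcases le_or_gt (a + m) d with hA | hB
  · have h2m : (2:ℕ) ^ m = 2 * a := by
      rw [ha, ← pow_succ']
      congr 1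
      omega
    have hpow : 2 ^ a * (2 * a) ≤ 2 ^ d := by
      calc 2 ^ a * (2 * a) = 2 ^ a * 2 ^ m := by rw [h2m]
        _ = 2 ^ (a + m) := (pow_add 2 a m).symm
        _ ≤ 2 ^ d := Nat.pow_le_pow_right (by norm_num) hA
    have key1 : 2 ^ (a + 1) * (d + m) ≤ (6 * m + 4) * 2 ^ d := by
      calc 2 ^ (a + 1) * (d + m) = 2 ^ a * (2 * (d + m)) := by ring
        _ ≤ 2 ^ a * ((6 * m + 4) * (2 * a)) := Nat.mul_le_mul_left _ (by nlinarith)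
        _ = (6 * m + 4) * (2 ^ a * (2 * a)) := by ring
        _ ≤ (6 * m + 4) * 2 ^ d := Nat.mul_le_mul_left _ hpow
    have key2 : 2 ^ (d + 1) * (d + m) ≤ (4 * a + 2 * m) * 2 ^ d := by
      calc 2 ^ (d + 1) * (d + m) = (2 * (d + m)) * 2 ^ d := by ring
        _ ≤ (4 * a + 2 * m) * 2 ^ d := Nat.mul_le_mul_right _ (by omega)
    calc (2 ^ (a + 1) + 2 ^ (d + 1)) * (d + m)
        = 2 ^ (a + 1) * (d + m) + 2 ^ (d + 1) * (d + m) := by ring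
      _ ≤ (6 * m + 4) * 2 ^ d + (4 * a + 2 * m) * 2 ^ d := Nat.add_le_add key1 key2
      _ = (4 * a + 8 * m + 4) * 2 ^ d := by ring
  · have hsum : 2 ^ (a + 1) + 2 ^ (d + 1) ≤ 4 * 2 ^ d := by
      rw [pow_succ, pow_succ]
      omega
    calc (2 ^ (a + 1) + 2 ^ (d + 1)) * (d + m) ≤ (4 * 2 ^ d) * (d + m) :=
          Nat.mul_le_mul_right _ hsum
      _ ≤ (4 * 2 ^ d) * (a + 2 * m) := Nat.mul_le_mul_left _ (by omega)
      _ = (4 * a + 8 * m) * 2 ^ d := by ring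
      _ ≤ (4 * a + 8 * m + 4) * 2 ^ d := Nat.mul_le_mul_right _ (by omega)

private lemma main_nat (k : ℕ) (hk : 1 ≤ k) :
    (∑ i ∈ Finset.range (k + 1), min (2 ^ (k - i)) (2 ^ (2 ^ i))) * k * 2 ^ (i0fn k)
      ≤ (2 * 2 ^ (i0fn k) + 8 * (i0fn k) + 4) * 2 ^ k := by
  rcases eq_or_lt_of_le hk with h1 | hk2
  · have hk1 : k = 1 := h1.symm
    subst hk1
    have hm0 : i0fn 1 = 0 := by
      rw [i0fn, Nat.find_eq_zero]
      norm_num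
    rw [hm0]
    norm_num [Finset.sum_range_succ]
  · set m := i0fn k with hmdef
    have hspec : k - m ≤ 2 ^ m := i0_spec k
    have hmk : m ≤ k := i0_le k
    have hm1 : 1 ≤ m := by
      by_contra hcon
      push_neg at hcon
      have h0 : m = 0 := by omega
      rw [h0, pow_zero] at hspec
      omega
    have h2m : (2:ℕ) ^ m = 2 * 2 ^ (m - 1) := by
      rw [← pow_succ']
      congr 1
      omega
    have hmin : 2 ^ (m - 1) < k - (m - 1) := i0_min k (m - 1) (by omega)
    have had : 2 ^ (m - 1) ≤ k - m := by omega
    have hda : k - m ≤ 2 * 2 ^ (m - 1) := by omega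
    have hkd : k = (k - m) + m := by omega
    -- bound the sum
    have hsplit : (∑ i ∈ Finset.range (k + 1), min (2 ^ (k - i)) (2 ^ (2 ^ i)))
        = (∑ i ∈ Finset.range m, min (2 ^ (k - i)) (2 ^ (2 ^ i)))
          + ∑ i ∈ Finset.Ico m (k + 1), min (2 ^ (k - i)) (2 ^ (2 ^ i)) := by
      rw [Finset.range_eq_Ico, Finset.range_eq_Ico]
      exact (Finset.sum_Ico_consecutive (fun i => min (2 ^ (k - i)) (2 ^ (2 ^ i)) : ℕ → ℕ) (k := k + 1) (Nat.zero_le m) (by omega)).symm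
    have hpart1 : (∑ i ∈ Finset.range m, min (2 ^ (k - i)) (2 ^ (2 ^ i)))
        ≤ 2 ^ (2 ^ (m - 1) + 1) := by
      have h1 : (∑ i ∈ Finset.range m, min (2 ^ (k - i)) (2 ^ (2 ^ i)))
          ≤ ∑ i ∈ Finset.range m, 2 ^ (2 ^ i) :=
        Finset.sum_le_sum fun i _ => min_le_right _ _
      have h2 := sum_ddexp' m hm1
      omega
    have hpart2 : (∑ i ∈ Finset.Ico m (k + 1), min (2 ^ (k - i)) (2 ^ (2 ^ i)))
        ≤ 2 ^ ((k - m) + 1) := by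
      have h1 : (∑ i ∈ Finset.Ico m (k + 1), min (2 ^ (k - i)) (2 ^ (2 ^ i)))
          ≤ ∑ i ∈ Finset.Ico m (k + 1), 2 ^ (k - i) :=
        Finset.sum_le_sum fun i _ => min_le_left _ _
      have h2 : (∑ i ∈ Finset.Ico m (k + 1), 2 ^ (k - i))
          = ∑ j ∈ Finset.range ((k - m) + 1), 2 ^ ((k - m) - j) := by
        rw [Finset.sum_Ico_eq_sum_range]
        have hh : k + 1 - m = (k - m) + 1 := by omega
        rw [hh]
        exact Finset.sum_congr rfl fun j hj => by congr 1; omega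
      have h3 : (∑ j ∈ Finset.range ((k - m) + 1), 2 ^ ((k - m) - j))
          = ∑ j ∈ Finset.range ((k - m) + 1), 2 ^ j :=
        Finset.sum_range_reflect (fun j => (2:ℕ) ^ j) ((k - m) + 1)
      have h4 := sum_two_pow ((k - m) + 1)
      omega
    have hS : (∑ i ∈ Finset.range (k + 1), min (2 ^ (k - i)) (2 ^ (2 ^ i)))
        ≤ 2 ^ (2 ^ (m - 1) + 1) + 2 ^ ((k - m) + 1) := by
      rw [hsplit]
      omega
    have hcore := core m (2 ^ (m - 1)) (k - m) hm1 rfl had hda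
    calc (∑ i ∈ Finset.range (k + 1), min (2 ^ (k - i)) (2 ^ (2 ^ i))) * k * 2 ^ m
        ≤ (2 ^ (2 ^ (m - 1) + 1) + 2 ^ ((k - m) + 1)) * k * 2 ^ m :=
          Nat.mul_le_mul_right _ (Nat.mul_le_mul_right _ hS)
      _ = ((2 ^ (2 ^ (m - 1) + 1) + 2 ^ ((k - m) + 1)) * ((k - m) + m)) * 2 ^ m := by
          rw [← hkd]
      _ ≤ ((4 * 2 ^ (m - 1) + 8 * m + 4) * 2 ^ (k - m)) * 2 ^ m :=
          Nat.mul_le_mul_right _ hcore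
      _ = (2 * 2 ^ m + 8 * m + 4) * 2 ^ k := by
          conv_rhs => rw [hkd, pow_add]
          rw [h2m]
          ring

/-- For positive integers `k`, `∑_{i=0}^{k} min(2^{k−i}, 2^{2^i}) ≤ (2 + ε_k)·2^k/k`
for some sequence `ε_k → 0` as `k → ∞`. -/
theorem sum_min_pow_le :
    ∃ ε : ℕ → ℝ, Filter.Tendsto ε Filter.atTop (nhds 0) ∧
      ∀ k : ℕ, 1 ≤ k →
        ((∑ i ∈ Finset.range (k + 1), min (2 ^ (k - i)) (2 ^ (2 ^ i)) : ℕ) : ℝ)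
          ≤ (2 + ε k) * (2 : ℝ) ^ k / (k : ℝ) := by
  have hi0 : Tendsto i0fn atTop atTop := by
    rw [tendsto_atTop]
    intro N
    filter_upwards [eventually_ge_atTop (2 ^ N + N + 1)] with k hk
    by_contra h
    push_neg at h
    have h1 : k - i0fn k ≤ 2 ^ i0fn k := Nat.find_spec (exists_i0 k)
    have h2 : (2:ℕ) ^ i0fn k ≤ 2 ^ N := Nat.pow_le_pow_right (by norm_num) (le_of_lt h)
    have h3 : k - i0fn k ≤ 2 ^ N := le_trans h1 h2
    omega
  have hg : Tendsto (fun n : ℕ => (8 * (n:ℝ) + 4) / 2 ^ n) atTop (nhds 0) := by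
    have h1 := tendsto_pow_const_div_const_pow_of_one_lt 1 (by norm_num : (1:ℝ) < 2)
    have h0 := tendsto_pow_const_div_const_pow_of_one_lt 0 (by norm_num : (1:ℝ) < 2)
    have hcomb := (h1.const_mul (8:ℝ)).add (h0.const_mul (4:ℝ))
    have heq : (fun n : ℕ => (8 * (n:ℝ) + 4) / 2 ^ n)
        = fun n : ℕ => 8 * ((n:ℝ) ^ 1 / 2 ^ n) + 4 * ((n:ℝ) ^ 0 / 2 ^ n) := by
      funext n
      have h2n : (2:ℝ) ^ n ≠ 0 := by positivity
      field_simp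
    rw [heq]
    simpa using hcomb
  refine ⟨fun k => (8 * (i0fn k : ℝ) + 4) / 2 ^ (i0fn k), hg.comp hi0, ?_⟩
  intro k hk
  have hnat := main_nat k hk
  have hk0 : (0:ℝ) < k := by exact_mod_cast hk
  rw [le_div_iff₀ hk0]
  set m := i0fn k
  have h2m : (0:ℝ) < 2 ^ m := by positivity
  have expand : (2 + (8 * (m:ℝ) + 4) / 2 ^ m) * 2 ^ k
      = ((2 * 2 ^ m + 8 * m + 4) * 2 ^ k) / 2 ^ m := by
    field_simp
    ring
  rw [expand, le_div_iff₀ h2m]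
  exact_mod_cast hnat
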